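/- Let p and q be integers with 0 < p < q, and let BS(q,p) be the Baumslag–Solitar group with generators a, b. Then the element a has at most logarithmic distortion: there exists a constant C > 0 such that for every integer n ≥ 1 the word length of aⁿ with respect to the generating set {a, b} satisfies ‖aⁿ‖ ≤ C·log(n+1). -/

import Mathlib

/-- The word length of `g` with respect to a generating set `S`:
the smallest `n` such that `g` is a product of `n` elements of `S ∪ S⁻¹`. -/
noncomputable def wordLength {G : Type*} [Group G] (S : Set G) (g : G) : ℕ :=
  sInf {n : ℕ | ∃ w : List G, w.length = n ∧ (∀ x ∈ w, x ∈ S ∨ x⁻¹ ∈ S) ∧ w.prod = g}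

/-- The Baumslag–Solitar group `BS(q,p) = ⟨a, b ∣ a^q = b a^p b⁻¹⟩`. -/
abbrev BaumslagSolitar (q p : ℤ) : Type :=
  PresentedGroup
    ({FreeGroup.of true ^ q *
        (FreeGroup.of false * FreeGroup.of true ^ p * (FreeGroup.of false)⁻¹)⁻¹} :
      Set (FreeGroup Bool))

/-- The generator `a` of `BS(q,p)`. -/
noncomputable def BSa (q p : ℤ) : BaumslagSolitar q p := PresentedGroup.of true

/-- The generator `b` of `BS(q,p)`. -/
noncomputable def BSb (q p : ℤ) : BaumslagSolitar q p := PresentedGroup.of false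

lemma wordLength_le_of_word {G : Type*} [Group G] (S : Set G) (g : G) (w : List G)
    (h1 : ∀ x ∈ w, x ∈ S ∨ x⁻¹ ∈ S) (h2 : w.prod = g) : wordLength S g ≤ w.length :=
  Nat.sInf_le ⟨w, rfl, h1, h2⟩

/-- The defining relation of `BS(q,p)`. -/
lemma BS_rel (q p : ℤ) :
    (BSa q p) ^ q = BSb q p * (BSa q p) ^ p * (BSb q p)⁻¹ := by
  set rels : Set (FreeGroup Bool) :=
    {FreeGroup.of true ^ q *
        (FreeGroup.of false * FreeGroup.of true ^ p * (FreeGroup.of false)⁻¹)⁻¹}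
  have h1 : PresentedGroup.mk rels (FreeGroup.of true ^ q *
      (FreeGroup.of false * FreeGroup.of true ^ p * (FreeGroup.of false)⁻¹)⁻¹) = 1 := by
    have : (FreeGroup.of true ^ q *
        (FreeGroup.of false * FreeGroup.of true ^ p * (FreeGroup.of false)⁻¹)⁻¹) ∈
        Subgroup.normalClosure rels :=
      Subgroup.subset_normalClosure rfl
    exact (QuotientGroup.eq_one_iff _).2 this
  simp only [map_mul, map_zpow, map_inv] at h1
  rw [mul_inv_eq_one] at h1
  exact h1

/-- The relation with natural-number exponents. -/
lemma BS_rel_nat (q p : ℤ) (hp : 0 ≤ p) (hq : 0 ≤ q) :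
    (BSa q p) ^ q.toNat = BSb q p * (BSa q p) ^ p.toNat * (BSb q p)⁻¹ := by
  rw [← zpow_natCast (BSa q p), ← zpow_natCast (BSa q p) p.toNat,
      Int.toNat_of_nonneg hq, Int.toNat_of_nonneg hp]
  exact BS_rel q p

/-- Key lemma: short words representing powers of `a`. -/
lemma BS_key (p q : ℤ) (hp : 0 < p) (hpq : p < q) :
    ∀ k : ℕ, ∀ n : ℕ, (n : ℝ) ≤ ((q : ℝ) / (p : ℝ)) ^ k →
      ∃ w : List (BaumslagSolitar q p),
        w.length ≤ (q.toNat + 2) * k + 1 ∧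
        (∀ x ∈ w, x ∈ ({BSa q p, BSb q p} : Set (BaumslagSolitar q p)) ∨
          x⁻¹ ∈ ({BSa q p, BSb q p} : Set (BaumslagSolitar q p))) ∧
        w.prod = (BSa q p) ^ n := by
  have hp0 : (0 : ℝ) < (p : ℝ) := by exact_mod_cast hp
  have hq0 : (0 : ℝ) < (q : ℝ) := by exact_mod_cast hp.trans hpq
  intro k
  induction k with
  | zero =>
    intro n hn
    simp only [pow_zero] at hn
    have hn1 : n ≤ 1 := by exact_mod_cast hn
    interval_cases n
    · exact ⟨[], by simp, by simp, by simp⟩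
    · exact ⟨[BSa q p], by simp, by simp, by simp⟩
  | succ k ih =>
    intro n hn
    by_cases hn1 : n ≤ 1
    · interval_cases n
      · exact ⟨[], by simp, by simp, by simp⟩
      · exact ⟨[BSa q p], by simp [Nat.le_add_left], by simp, by simp⟩
    · push_neg at hn1
      set Q := q.toNat with hQ
      set P := p.toNat with hP
      have hQ2 : 2 ≤ Q := by omega
      have hQq : (Q : ℝ) = (q : ℝ) := by
        rw [hQ]; exact_mod_cast Int.toNat_of_nonneg (by omega : (0:ℤ) ≤ q)
      have hPp : (P : ℝ) = (p : ℝ) := by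
        rw [hP]; exact_mod_cast Int.toNat_of_nonneg hp.le
      set m := n / Q with hm
      set r := n % Q with hr
      have hdm : Q * m + r = n := Nat.div_add_mod n Q
      have hrQ : r < Q := Nat.mod_lt _ (by omega)
      -- bound for the recursive call
      have hrec : ((P * m : ℕ) : ℝ) ≤ ((q : ℝ) / (p : ℝ)) ^ k := by
        have h1 : (m : ℝ) ≤ (n : ℝ) / (Q : ℝ) := Nat.cast_div_le
        push_cast
        rw [hPp]
        have h2 : (p : ℝ) * (m : ℝ) ≤ (p : ℝ) * ((n : ℝ) / (q : ℝ)) := by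
          rw [← hQq]; exact mul_le_mul_of_nonneg_left h1 hp0.le
        have h3 : (p : ℝ) * ((n : ℝ) / (q : ℝ)) ≤ ((q : ℝ) / (p : ℝ)) ^ k := by
          rw [pow_succ] at hn
          rw [mul_comm, div_mul_eq_mul_div, div_le_iff₀ hq0]
          calc (n : ℝ) * (p : ℝ) ≤ (((q:ℝ)/(p:ℝ)) ^ k * ((q:ℝ)/(p:ℝ))) * (p:ℝ) := by
                exact mul_le_mul_of_nonneg_right hn hp0.le
            _ = ((q:ℝ)/(p:ℝ)) ^ k * (q:ℝ) := by field_simp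
        linarith
      obtain ⟨w', hlen', hmem', hprod'⟩ := ih (P * m) hrec
      refine ⟨List.replicate r (BSa q p) ++ (BSb q p :: (w' ++ [(BSb q p)⁻¹])), ?_, ?_, ?_⟩
      · simp only [List.length_append, List.length_replicate, List.length_cons,
          List.length_singleton, List.length_nil]
        have hexp : (Q + 2) * (k + 1) = (Q + 2) * k + (Q + 2) := by ring
        omega
      · intro x hx
        simp only [List.mem_append, List.mem_replicate, List.mem_cons,
          List.mem_singleton] at hx
        rcases hx with ⟨-, rfl⟩ | rfl | hx | rfl | hfalse
        · exact Or.inl (Or.inl rfl)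
        · exact Or.inl (Or.inr rfl)
        · exact hmem' x hx
        · exact Or.inr (by simp)
        · exact absurd hfalse List.not_mem_nil
      · have hrel : (BSa q p) ^ Q = BSb q p * (BSa q p) ^ P * (BSb q p)⁻¹ :=
          BS_rel_nat q p hp.le (by omega)
        have hconj : (BSa q p) ^ (Q * m) = BSb q p * (BSa q p) ^ (P * m) * (BSb q p)⁻¹ := by
          rw [pow_mul, hrel, conj_pow, ← pow_mul]
        calc (List.replicate r (BSa q p) ++ (BSb q p :: (w' ++ [(BSb q p)⁻¹]))).prod
            = (BSa q p) ^ r * (BSb q p * ((BSa q p) ^ (P * m) * (BSb q p)⁻¹)) := by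
              simp [List.prod_replicate, hprod']
          _ = (BSa q p) ^ r * (BSa q p) ^ (Q * m) := by
              rw [hconj]; group
          _ = (BSa q p) ^ n := by rw [← pow_add]; congr 1; omega

/-- In `BS(q,p)` with `0 < p < q`, the element `a` has at most logarithmic
distortion: `‖aⁿ‖ ≤ C · log (n+1)` for all `n ≥ 1`. -/
theorem BS_a_log_distortion (p q : ℤ) (hp : 0 < p) (hpq : p < q) :
    ∃ C : ℝ, 0 < C ∧ ∀ n : ℤ, 1 ≤ n →
      (wordLength ({BSa q p, BSb q p} : Set (BaumslagSolitar q p)) ((BSa q p) ^ n) : ℝ) ≤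
        C * Real.log ((n : ℝ) + 1) := by
  have hp0 : (0 : ℝ) < (p : ℝ) := by exact_mod_cast hp
  have hq0 : (0 : ℝ) < (q : ℝ) := by exact_mod_cast hp.trans hpq
  set ρ : ℝ := (q : ℝ) / (p : ℝ) with hρ
  have hρ1 : 1 < ρ := by
    rw [hρ, lt_div_iff₀ hp0, one_mul]; exact_mod_cast hpq
  have hlogρ : 0 < Real.log ρ := Real.log_pos hρ1
  have hlog2 : 0 < Real.log 2 := Real.log_pos (by norm_num)
  set A : ℝ := (q.toNat : ℝ) + 2 with hA
  have hA0 : (0 : ℝ) < A := by positivity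
  refine ⟨A / Real.log ρ + (A + 1) / Real.log 2, by positivity, ?_⟩
  intro n hn
  set N := n.toNat with hN
  have hN1 : 1 ≤ N := by omega
  have hNZ : (N : ℤ) = n := Int.toNat_of_nonneg (by omega)
  have hNn : ((N : ℕ) : ℝ) = (n : ℝ) := by exact_mod_cast congrArg (fun z : ℤ => (z : ℝ)) hNZ
  have hN0 : (0 : ℝ) < (N : ℝ) := by exact_mod_cast hN1
  set k : ℕ := ⌈Real.log N / Real.log ρ⌉₊ with hk
  have hlogN : 0 ≤ Real.log (N : ℝ) := Real.log_nonneg (by exact_mod_cast hN1)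
  have hNρk : (N : ℝ) ≤ ρ ^ k := by
    have h1 : Real.log N / Real.log ρ ≤ (k : ℝ) := Nat.le_ceil _
    have h2 : Real.log N ≤ (k : ℝ) * Real.log ρ := by
      rw [div_le_iff₀ hlogρ] at h1; linarith
    have h3 : Real.log N ≤ Real.log (ρ ^ k) := by rw [Real.log_pow]; exact_mod_cast h2
    exact (Real.log_le_log_iff hN0 (by positivity)).1 h3
  obtain ⟨w, hlen, hmem, hprod⟩ := BS_key p q hp hpq k N hNρk
  have hzpow : (BSa q p) ^ n = (BSa q p) ^ N := by
    rw [show n = (N : ℤ) from (Int.toNat_of_nonneg (by omega)).symm, zpow_natCast]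
  have hwl : wordLength ({BSa q p, BSb q p} : Set (BaumslagSolitar q p)) ((BSa q p) ^ n)
      ≤ (q.toNat + 2) * k + 1 := by
    rw [hzpow]
    exact le_trans (wordLength_le_of_word _ _ w hmem hprod) hlen
  have hwlR : (wordLength ({BSa q p, BSb q p} : Set (BaumslagSolitar q p)) ((BSa q p) ^ n) : ℝ)
      ≤ A * k + 1 := by
    have := (Nat.cast_le (α := ℝ)).2 hwl
    push_cast at this
    rw [hA]; linarith
  set L : ℝ := Real.log ((n : ℝ) + 1) with hL
  have hlogNL : Real.log (N : ℝ) ≤ L := by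
    apply Real.log_le_log hN0
    rw [hNn]; linarith
  have hlog2L : Real.log 2 ≤ L := by
    apply Real.log_le_log (by norm_num)
    have : (1 : ℝ) ≤ (n : ℝ) := by exact_mod_cast hn
    linarith
  have hkb : (k : ℝ) ≤ Real.log N / Real.log ρ + 1 :=
    le_of_lt (Nat.ceil_lt_add_one (by positivity))
  have e1 : A * (k : ℝ) ≤ A / Real.log ρ * L + A := by
    have : A * (Real.log N / Real.log ρ) ≤ A / Real.log ρ * L := by
      rw [mul_div_assoc', div_mul_eq_mul_div, div_le_div_iff₀ hlogρ hlogρ]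
      nlinarith [mul_nonneg (mul_nonneg hA0.le hlogρ.le) (sub_nonneg.2 hlogNL)]
    nlinarith
  have e2 : A + 1 ≤ (A + 1) / Real.log 2 * L := by
    rw [div_mul_eq_mul_div, le_div_iff₀ hlog2]
    nlinarith
  calc (wordLength ({BSa q p, BSb q p} : Set (BaumslagSolitar q p)) ((BSa q p) ^ n) : ℝ)
      ≤ A * k + 1 := hwlR
    _ ≤ (A / Real.log ρ + (A + 1) / Real.log 2) * L := by
        have hdist : (A / Real.log ρ + (A + 1) / Real.log 2) * L
            = A / Real.log ρ * L + (A + 1) / Real.log 2 * L := by ring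
        linarith
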